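/- If H is a fixed multiplex with at least one edge, F* ⊆ H is a submultiplex achieving the minimum in Φ_H = min over submultiplexes F ⊆ H with |E(F)| ≥ 1 of n^{|V(F)|} p₁^{|E(F¹)\E(F²)|} p₂^{|E(F²)\E(F¹)|} p₁₂^{|E(F¹)∩E(F²)|}, and Φ_H → 0 as n → ∞, then P(X(H, G_n) > 0) → 0. -/

import Mathlib

structure Multiplex (V : Type) [DecidableEq V] where
  verts : Finset V
  E1 : Finset (Sym2 V)
  E2 : Finset (Sym2 V)
  support : ∀ e ∈ E1 ∪ E2, ∀ x ∈ e, x ∈ verts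
  loopless : ∀ e ∈ E1 ∪ E2, ¬ e.IsDiag

def Multiplex.Sub {V : Type} [DecidableEq V] (F H : Multiplex V) : Prop :=
  F.verts ⊆ H.verts ∧ F.E1 ⊆ H.E1 ∧ F.E2 ⊆ H.E2

noncomputable def ell {V : Type} [DecidableEq V] (F : Multiplex V) (θ : ℝ × ℝ × ℝ) : ℝ :=
  (F.verts.card : ℝ) - θ.1 * ((F.E1 \ F.E2).card : ℝ)
    - θ.2.1 * ((F.E2 \ F.E1).card : ℝ) - θ.2.2 * ((F.E1 ∩ F.E2).card : ℝ)

def PairIdx (n : ℕ) : Type := {p : Fin n × Fin n // p.1 < p.2}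

instance (n : ℕ) : Fintype (PairIdx n) := by unfold PairIdx; infer_instance
instance (n : ℕ) : DecidableEq (PairIdx n) := by unfold PairIdx; infer_instance

def Config (n : ℕ) : Type := PairIdx n → Bool × Bool

instance (n : ℕ) : Fintype (Config n) := by unfold Config; infer_instance

def edgeW (p1 p2 p12 : ℝ) : Bool × Bool → ℝ
  | (true, true) => p12
  | (true, false) => p1 - p12
  | (false, true) => p2 - p12
  | (false, false) => 1 - p1 - p2 + p12

noncomputable def configProb (n : ℕ) (p1 p2 p12 : ℝ) (f : Config n) : ℝ :=
  ∏ e : PairIdx n, edgeW p1 p2 p12 (f e)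

open Classical in
noncomputable def Pr (n : ℕ) (p1 p2 p12 : ℝ) (A : Config n → Prop) : ℝ :=
  ∑ f ∈ Finset.univ.filter A, configProb n p1 p2 p12 f

noncomputable def expect (n : ℕ) (p1 p2 p12 : ℝ) (g : Config n → ℝ) : ℝ :=
  ∑ f : Config n, configProb n p1 p2 p12 f * g f

def ValidP (p1 p2 p12 : ℝ) : Prop :=
  0 < p1 ∧ p1 < 1 ∧ 0 < p2 ∧ p2 < 1 ∧ 0 < p12 ∧
    max 0 (p1 + p2 - 1) ≤ p12 ∧ p12 ≤ min p1 p2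

def adj1 {n : ℕ} (f : Config n) (i j : Fin n) : Prop :=
  ∃ p : PairIdx n, (p.val = (i, j) ∨ p.val = (j, i)) ∧ (f p).1 = true

def adj2 {n : ℕ} (f : Config n) (i j : Fin n) : Prop :=
  ∃ p : PairIdx n, (p.val = (i, j) ∨ p.val = (j, i)) ∧ (f p).2 = true

def IsHom {V : Type} [DecidableEq V] {n : ℕ} (H : Multiplex V)
    (φ : {x // x ∈ H.verts} → Fin n) (f : Config n) : Prop :=
  (∀ a b : {x // x ∈ H.verts}, s(a.val, b.val) ∈ H.E1 → adj1 f (φ a) (φ b)) ∧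
  (∀ a b : {x // x ∈ H.verts}, s(a.val, b.val) ∈ H.E2 → adj2 f (φ a) (φ b))

open Classical in
noncomputable def homCount {V : Type} [DecidableEq V] (n : ℕ) (H : Multiplex V)
    (f : Config n) : ℕ :=
  (Finset.univ.filter
    (fun φ : {x // x ∈ H.verts} ↪ Fin n => IsHom H (fun a => φ a) f)).card

noncomputable def phiVal {V : Type} [DecidableEq V] (F : Multiplex V) (n : ℕ)
    (p1 p2 p12 : ℝ) : ℝ :=
  (n : ℝ) ^ F.verts.card * p1 ^ (F.E1 \ F.E2).card * p2 ^ (F.E2 \ F.E1).card *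
    p12 ^ (F.E1 ∩ F.E2).card


section AuxStmt10

open Finset

variable {V : Type} [DecidableEq V] {n : ℕ}

def corr (F : Multiplex V) (φ : {x // x ∈ F.verts} → Fin n)
    (e : Sym2 V) (p : PairIdx n) : Prop :=
  ∃ a b : {x // x ∈ F.verts}, e = s(a.val, b.val) ∧ p.val = (φ a, φ b)

lemma corr_right_unique {F : Multiplex V} {φ : {x // x ∈ F.verts} → Fin n}
    {e : Sym2 V} {p p' : PairIdx n} (h : corr F φ e p) (h' : corr F φ e p') : p = p' := by
  obtain ⟨a, b, rfl, hp⟩ := h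
  obtain ⟨a', b', he, hp'⟩ := h'
  rcases Sym2.eq_iff.mp he with ⟨h1, h2⟩ | ⟨h1, h2⟩
  · have ha : a = a' := Subtype.ext h1
    have hb : b = b' := Subtype.ext h2
    apply Subtype.ext
    rw [hp, hp', ha, hb]
  · have ha : a = b' := Subtype.ext h1
    have hb : b = a' := Subtype.ext h2
    exfalso
    have hlt := p.prop
    have hlt' := p'.prop
    rw [hp] at hlt
    rw [hp', ← ha, ← hb] at hlt'
    exact absurd hlt (lt_asymm hlt')

lemma corr_left_unique {F : Multiplex V} {φ : {x // x ∈ F.verts} → Fin n}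
    (hinj : Function.Injective φ) {e e' : Sym2 V} {p : PairIdx n}
    (h : corr F φ e p) (h' : corr F φ e' p) : e = e' := by
  obtain ⟨a, b, rfl, hp⟩ := h
  obtain ⟨a', b', rfl, hp'⟩ := h'
  rw [hp] at hp'
  have h1 : φ a = φ a' := congrArg Prod.fst hp'
  have h2 : φ b = φ b' := congrArg Prod.snd hp'
  rw [hinj h1, hinj h2]

lemma corr_exists (F : Multiplex V) {φ : {x // x ∈ F.verts} → Fin n}
    (hinj : Function.Injective φ) {e : Sym2 V} (he : e ∈ F.E1 ∪ F.E2) :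
    ∃ p, corr F φ e p := by
  induction e using Sym2.ind with
  | _ x y =>
    have hx : x ∈ F.verts := F.support _ he x (by simp)
    have hy : y ∈ F.verts := F.support _ he y (by simp)
    have hxy : x ≠ y := fun h => F.loopless _ he (by simp [h])
    have hne : φ ⟨x, hx⟩ ≠ φ ⟨y, hy⟩ := fun h => hxy (congrArg Subtype.val (hinj h))
    by_cases h' : φ ⟨x, hx⟩ < φ ⟨y, hy⟩
    · exact ⟨⟨(φ ⟨x, hx⟩, φ ⟨y, hy⟩), h'⟩, ⟨x, hx⟩, ⟨y, hy⟩, rfl, rfl⟩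
    · exact ⟨⟨(φ ⟨y, hy⟩, φ ⟨x, hx⟩), hne.lt_or_gt.resolve_left h'⟩, ⟨y, hy⟩, ⟨x, hx⟩,
        Sym2.eq_swap, rfl⟩

open Classical in
lemma card_corr (F : Multiplex V) {φ : {x // x ∈ F.verts} → Fin n}
    (hinj : Function.Injective φ) (A : Finset (Sym2 V)) (hA : A ⊆ F.E1 ∪ F.E2) :
    (univ.filter (fun p : PairIdx n => ∃ e ∈ A, corr F φ e p)).card = A.card := by
  classical
  refine (Finset.card_bij (fun e he => Classical.choose (corr_exists F hinj (hA he)))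
    ?_ ?_ ?_).symm
  · intro e he
    simp only [mem_filter, mem_univ, true_and]
    exact ⟨e, he, Classical.choose_spec (corr_exists F hinj (hA he))⟩
  · intro e1 h1 e2 h2 heq
    have c1 := Classical.choose_spec (corr_exists F hinj (hA h1))
    have c2 := Classical.choose_spec (corr_exists F hinj (hA h2))
    rw [heq] at c1
    exact corr_left_unique hinj c1 c2
  · intro p hp
    simp only [mem_filter, mem_univ, true_and] at hp
    obtain ⟨e, heA, hc⟩ := hp
    exact ⟨e, heA, corr_right_unique (Classical.choose_spec (corr_exists F hinj (hA heA))) hc⟩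


lemma edgeW_nonneg {p1 p2 p12 : ℝ} (hv : ValidP p1 p2 p12) (v : Bool × Bool) :
    0 ≤ edgeW p1 p2 p12 v := by
  obtain ⟨h1, h1', h2, h2', h12, hmax, hmin⟩ := hv
  have ha := le_min_iff.mp hmin
  have hb := max_le_iff.mp hmax
  rcases v with ⟨(_|_), (_|_)⟩ <;> simp [edgeW] <;> linarith [ha.1, ha.2, hb.2]

lemma configProb_nonneg {p1 p2 p12 : ℝ} (hv : ValidP p1 p2 p12) (f : Config n) :
    0 ≤ configProb n p1 p2 p12 f :=
  Finset.prod_nonneg fun e _ => edgeW_nonneg hv (f e)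

open Classical in
noncomputable def allowed (F : Multiplex V) (φ : {x // x ∈ F.verts} → Fin n)
    (p : PairIdx n) : Finset (Bool × Bool) :=
  univ.filter (fun v => ((∃ e ∈ F.E1, corr F φ e p) → v.1 = true) ∧
    ((∃ e ∈ F.E2, corr F φ e p) → v.2 = true))

open Classical in
lemma sum_allowed {p1 p2 p12 : ℝ} (F : Multiplex V)
    (φ : {x // x ∈ F.verts} → Fin n) (p : PairIdx n) :
    ∑ v ∈ allowed F φ p, edgeW p1 p2 p12 v
      = p1 ^ (if (∃ e ∈ F.E1, corr F φ e p) ∧ ¬ (∃ e ∈ F.E2, corr F φ e p) then 1 else 0)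
        * p2 ^ (if (∃ e ∈ F.E2, corr F φ e p) ∧ ¬ (∃ e ∈ F.E1, corr F φ e p) then 1 else 0)
        * p12 ^ (if (∃ e ∈ F.E1, corr F φ e p) ∧ (∃ e ∈ F.E2, corr F φ e p) then 1 else 0) := by
  classical
  rw [allowed, Finset.sum_filter]
  by_cases h1 : (∃ e ∈ F.E1, corr F φ e p) <;> by_cases h2 : (∃ e ∈ F.E2, corr F φ e p) <;>
    simp [Fintype.sum_prod_type, h1, h2, edgeW] <;> ring

open Classical in
lemma filter_isHom_eq (F : Multiplex V) {φ : {x // x ∈ F.verts} → Fin n}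
    (hinj : Function.Injective φ) :
    (univ.filter (fun f : Config n => IsHom F φ f))
      = Fintype.piFinset (allowed F φ) := by
  classical
  ext f
  have hmem : f ∈ Fintype.piFinset (allowed F φ) ↔ ∀ p, f p ∈ allowed F φ p :=
    Fintype.mem_piFinset
  rw [mem_filter]
  refine Iff.trans ?_ hmem.symm
  simp only [mem_univ, true_and, allowed, mem_filter]
  constructor
  · rintro ⟨hh1, hh2⟩ p
    constructor
    · rintro ⟨e, he, a, b, rfl, hp⟩
      obtain ⟨q, hq, hq1⟩ := hh1 a b he
      have hqp : q = p := by
        rcases hq with hq | hq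
        · exact Subtype.ext (hq.trans hp.symm)
        · exfalso
          have hlt := q.prop
          have hlt' := p.prop
          rw [hq] at hlt
          rw [hp] at hlt'
          exact absurd hlt (lt_asymm hlt')
      rwa [hqp] at hq1
    · rintro ⟨e, he, a, b, rfl, hp⟩
      obtain ⟨q, hq, hq1⟩ := hh2 a b he
      have hqp : q = p := by
        rcases hq with hq | hq
        · exact Subtype.ext (hq.trans hp.symm)
        · exfalso
          have hlt := q.prop
          have hlt' := p.prop
          rw [hq] at hlt
          rw [hp] at hlt'
          exact absurd hlt (lt_asymm hlt')
      rwa [hqp] at hq1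
  · intro hf
    have key : ∀ a b : {x // x ∈ F.verts}, s(a.val, b.val) ∈ F.E1 ∪ F.E2 →
        ∃ p : PairIdx n, (p.val = (φ a, φ b) ∨ p.val = (φ b, φ a)) ∧
          corr F φ s(a.val, b.val) p := by
      intro a b hab
      have hne : φ a ≠ φ b := by
        intro h
        have hvne : (a : V) ≠ (b : V) := fun hv => F.loopless _ hab (by simp [hv])
        exact hvne (congrArg Subtype.val (hinj h))
      by_cases h' : φ a < φ b
      · exact ⟨⟨(φ a, φ b), h'⟩, Or.inl rfl, a, b, rfl, rfl⟩
      · exact ⟨⟨(φ b, φ a), hne.lt_or_gt.resolve_left h'⟩, Or.inr rfl, b, a,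
          Sym2.eq_swap, rfl⟩
    constructor
    · intro a b hab
      obtain ⟨p, hp, hc⟩ := key a b (mem_union_left _ hab)
      exact ⟨p, hp, (hf p).1 ⟨_, hab, hc⟩⟩
    · intro a b hab
      obtain ⟨p, hp, hc⟩ := key a b (mem_union_right _ hab)
      exact ⟨p, hp, (hf p).2 ⟨_, hab, hc⟩⟩

open Classical in
lemma card_n1 (F : Multiplex V) {φ : {x // x ∈ F.verts} → Fin n}
    (hinj : Function.Injective φ) :
    (univ.filter (fun p : PairIdx n =>
      (∃ e ∈ F.E1, corr F φ e p) ∧ ¬ (∃ e ∈ F.E2, corr F φ e p))).card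
      = (F.E1 \ F.E2).card := by
  rw [← card_corr F hinj (F.E1 \ F.E2)
    (fun e he => mem_union_left _ (mem_sdiff.mp he).1)]
  congr 1
  ext p
  simp only [mem_filter, mem_univ, true_and, mem_sdiff]
  constructor
  · rintro ⟨⟨e, he, hc⟩, hn2⟩
    exact ⟨e, ⟨he, fun he2 => hn2 ⟨e, he2, hc⟩⟩, hc⟩
  · rintro ⟨e, ⟨he1, he2⟩, hc⟩
    exact ⟨⟨e, he1, hc⟩, fun ⟨e', he2', hc'⟩ =>
      he2 ((corr_left_unique hinj hc' hc) ▸ he2')⟩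

open Classical in
lemma card_n2 (F : Multiplex V) {φ : {x // x ∈ F.verts} → Fin n}
    (hinj : Function.Injective φ) :
    (univ.filter (fun p : PairIdx n =>
      (∃ e ∈ F.E2, corr F φ e p) ∧ ¬ (∃ e ∈ F.E1, corr F φ e p))).card
      = (F.E2 \ F.E1).card := by
  rw [← card_corr F hinj (F.E2 \ F.E1)
    (fun e he => mem_union_right _ (mem_sdiff.mp he).1)]
  congr 1
  ext p
  simp only [mem_filter, mem_univ, true_and, mem_sdiff]
  constructor
  · rintro ⟨⟨e, he, hc⟩, hn2⟩
    exact ⟨e, ⟨he, fun he2 => hn2 ⟨e, he2, hc⟩⟩, hc⟩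
  · rintro ⟨e, ⟨he1, he2⟩, hc⟩
    exact ⟨⟨e, he1, hc⟩, fun ⟨e', he2', hc'⟩ =>
      he2 ((corr_left_unique hinj hc' hc) ▸ he2')⟩

open Classical in
lemma card_n12 (F : Multiplex V) {φ : {x // x ∈ F.verts} → Fin n}
    (hinj : Function.Injective φ) :
    (univ.filter (fun p : PairIdx n =>
      (∃ e ∈ F.E1, corr F φ e p) ∧ (∃ e ∈ F.E2, corr F φ e p))).card
      = (F.E1 ∩ F.E2).card := by
  rw [← card_corr F hinj (F.E1 ∩ F.E2)
    (fun e he => mem_union_left _ (mem_inter.mp he).1)]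
  congr 1
  ext p
  simp only [mem_filter, mem_univ, true_and, mem_inter]
  constructor
  · rintro ⟨⟨e, he1, hc⟩, ⟨e', he2, hc'⟩⟩
    exact ⟨e, ⟨he1, (corr_left_unique hinj hc' hc) ▸ he2⟩, hc⟩
  · rintro ⟨e, ⟨he1, he2⟩, hc⟩
    exact ⟨⟨e, he1, hc⟩, ⟨e, he2, hc⟩⟩

open Classical in
lemma pr_isHom (F : Multiplex V) {φ : {x // x ∈ F.verts} → Fin n}
    (hinj : Function.Injective φ) (p1 p2 p12 : ℝ) :
    ∑ f ∈ univ.filter (fun f : Config n => IsHom F φ f), configProb n p1 p2 p12 f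
      = p1 ^ (F.E1 \ F.E2).card * p2 ^ (F.E2 \ F.E1).card
        * p12 ^ (F.E1 ∩ F.E2).card := by
  rw [filter_isHom_eq F hinj]
  have hps := Finset.prod_univ_sum (κ := fun _ : PairIdx n => Bool × Bool)
    (allowed F φ) (fun _ v => edgeW p1 p2 p12 v)
  show (∑ x ∈ Fintype.piFinset (allowed F φ), ∏ i : PairIdx n, edgeW p1 p2 p12 (x i))
      = p1 ^ (F.E1 \ F.E2).card * p2 ^ (F.E2 \ F.E1).card * p12 ^ (F.E1 ∩ F.E2).card
  rw [← hps]
  rw [Finset.prod_congr rfl (fun p _ => sum_allowed F φ p)]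
  rw [Finset.prod_mul_distrib, Finset.prod_mul_distrib,
    Finset.prod_pow_eq_pow_sum, Finset.prod_pow_eq_pow_sum, Finset.prod_pow_eq_pow_sum,
    ← Finset.card_filter, ← Finset.card_filter, ← Finset.card_filter,
    card_n1 F hinj, card_n2 F hinj, card_n12 F hinj]

lemma Pr_eq (n : ℕ) (p1 p2 p12 : ℝ) (A : Config n → Prop) [DecidablePred A] :
    Pr n p1 p2 p12 A = ∑ f ∈ Finset.univ.filter A, configProb n p1 p2 p12 f := by
  rw [Pr]
  congr 1
  exact Finset.filter_congr_decidable _ _ _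

lemma homCount_restrict {H Fstar : Multiplex V} (hsub : Fstar.Sub H) {f : Config n}
    (h : 0 < homCount n H f) : 0 < homCount n Fstar f := by
  classical
  rw [homCount, Finset.card_pos] at h ⊢
  obtain ⟨φ, hφ⟩ := h
  simp only [mem_filter, mem_univ, true_and] at hφ
  refine ⟨Function.Embedding.trans
    ⟨fun a => ⟨a.1, hsub.1 a.2⟩, fun a b hab => Subtype.ext (Subtype.mk_eq_mk.mp hab)⟩ φ, ?_⟩
  simp only [mem_filter, mem_univ, true_and]
  exact ⟨fun a b hab => hφ.1 _ _ (hsub.2.1 hab), fun a b hab => hφ.2 _ _ (hsub.2.2 hab)⟩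

lemma expect_hom_le (F : Multiplex V) (n : ℕ) {p1 p2 p12 : ℝ} (hv : ValidP p1 p2 p12) :
    ∑ f : Config n, configProb n p1 p2 p12 f * (homCount n F f : ℝ)
      ≤ phiVal F n p1 p2 p12 := by
  classical
  have step1 : ∀ f : Config n, configProb n p1 p2 p12 f * (homCount n F f : ℝ)
      = ∑ φ : {x // x ∈ F.verts} ↪ Fin n,
          if IsHom F (fun a => φ a) f then configProb n p1 p2 p12 f else 0 := by
    intro f
    rw [mul_comm]
    simp only [homCount]
    rw [← Finset.sum_filter, Finset.sum_const, nsmul_eq_mul]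
  rw [Finset.sum_congr rfl (fun f _ => step1 f), Finset.sum_comm]
  have step2 : ∀ φ : {x // x ∈ F.verts} ↪ Fin n,
      (∑ f : Config n, if IsHom F (fun a => φ a) f then configProb n p1 p2 p12 f else 0)
      = p1 ^ (F.E1 \ F.E2).card * p2 ^ (F.E2 \ F.E1).card * p12 ^ (F.E1 ∩ F.E2).card := by
    intro φ
    rw [← Finset.sum_filter]
    exact pr_isHom F φ.injective p1 p2 p12
  rw [Finset.sum_congr rfl (fun φ _ => step2 φ), Finset.sum_const, nsmul_eq_mul,
    Finset.card_univ]
  have hC : 0 ≤ p1 ^ (F.E1 \ F.E2).card * p2 ^ (F.E2 \ F.E1).card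
      * p12 ^ (F.E1 ∩ F.E2).card := by
    obtain ⟨h1, _, h2, _, h12, _, _⟩ := hv
    positivity
  have hcard : (Fintype.card ({x // x ∈ F.verts} ↪ Fin n) : ℝ)
      ≤ (n : ℝ) ^ F.verts.card := by
    rw [Fintype.card_embedding_eq, Fintype.card_coe, Fintype.card_fin]
    calc ((n.descFactorial F.verts.card : ℕ) : ℝ)
        ≤ ((n ^ F.verts.card : ℕ) : ℝ) := by exact_mod_cast Nat.descFactorial_le_pow n _
      _ = (n : ℝ) ^ F.verts.card := by push_cast; ring
  calc (Fintype.card ({x // x ∈ F.verts} ↪ Fin n) : ℝ)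
        * (p1 ^ (F.E1 \ F.E2).card * p2 ^ (F.E2 \ F.E1).card * p12 ^ (F.E1 ∩ F.E2).card)
      ≤ (n : ℝ) ^ F.verts.card
        * (p1 ^ (F.E1 \ F.E2).card * p2 ^ (F.E2 \ F.E1).card * p12 ^ (F.E1 ∩ F.E2).card) :=
        mul_le_mul_of_nonneg_right hcard hC
    _ = phiVal F n p1 p2 p12 := by rw [phiVal]; ring

end AuxStmt10

theorem stmt10 {V : Type} [DecidableEq V] (H : Multiplex V)
    (hedge : (H.E1 ∪ H.E2).Nonempty)
    (p1 p2 p12 : ℕ → ℝ) (hvalid : ∀ n, ValidP (p1 n) (p2 n) (p12 n))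
    (Fstar : Multiplex V) (hsub : Fstar.Sub H)
    (hFedge : (Fstar.E1 ∪ Fstar.E2).Nonempty)
    (hmin : ∀ (n : ℕ) (F : Multiplex V), F.Sub H → (F.E1 ∪ F.E2).Nonempty →
      phiVal Fstar n (p1 n) (p2 n) (p12 n) ≤ phiVal F n (p1 n) (p2 n) (p12 n))
    (hPhi : Filter.Tendsto (fun n => phiVal Fstar n (p1 n) (p2 n) (p12 n))
      Filter.atTop (nhds 0)) :
    Filter.Tendsto (fun n => Pr n (p1 n) (p2 n) (p12 n) (fun f => 0 < homCount n H f))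
      Filter.atTop (nhds 0) := by
  classical
  refine squeeze_zero (fun m => ?_) (fun m => ?_) hPhi
  · rw [Pr_eq]
    exact Finset.sum_nonneg fun f _ => configProb_nonneg (hvalid m) f
  calc Pr m (p1 m) (p2 m) (p12 m) (fun f => 0 < homCount m H f)
      ≤ ∑ f : Config m, configProb m (p1 m) (p2 m) (p12 m) f * (homCount m Fstar f : ℝ) := by
        rw [Pr_eq]
        calc ∑ f ∈ Finset.univ.filter (fun f : Config m => 0 < homCount m H f),
              configProb m (p1 m) (p2 m) (p12 m) f
            ≤ ∑ f ∈ Finset.univ.filter (fun f : Config m => 0 < homCount m H f),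
              configProb m (p1 m) (p2 m) (p12 m) f * (homCount m Fstar f : ℝ) := by
              refine Finset.sum_le_sum fun f hf => ?_
              simp only [Finset.mem_filter, Finset.mem_univ, true_and] at hf
              have h1 : (1 : ℝ) ≤ (homCount m Fstar f : ℝ) := by
                exact_mod_cast homCount_restrict hsub hf
              exact le_mul_of_one_le_right (configProb_nonneg (hvalid m) f) h1
          _ ≤ ∑ f : Config m, configProb m (p1 m) (p2 m) (p12 m) f
                * (homCount m Fstar f : ℝ) :=
              Finset.sum_le_sum_of_subset_of_nonneg (Finset.filter_subset _ _)
                (fun f _ _ => mul_nonneg (configProb_nonneg (hvalid m) f)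
                  (Nat.cast_nonneg _))
    _ ≤ phiVal Fstar m (p1 m) (p2 m) (p12 m) := expect_hom_le Fstar m (hvalid m)
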